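/- Define the Rumin differential d_c := Π_{E₀} ∘ d ∘ Π_E. Then d_c ∘ d_c = 0 and Π_E ∘ d_c = d ∘ Π_E. (Together with the fact that Π_{E₀}|_E and Π_E|_{E₀} are mutually inverse bijections, this says the complex (E₀, d_c) is conjugate to the subcomplex (E, d) of (V, d).) -/

import Mathlib

/-- The Rumin differential `d_c := Π_{E₀} ∘ d ∘ Π_E` satisfies
`d_c ∘ d_c = 0` and `Π_E ∘ d_c = d ∘ Π_E` (so `(E₀, d_c)` is conjugate to `(E, d)`). -/
theorem rumin_differential_squares_to_zero_and_conjugates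
    {V : Type*} [NormedAddCommGroup V] [InnerProductSpace ℝ V] [FiniteDimensional ℝ V]
    (d₀ dinv : V →ₗ[ℝ] V) (hd₀ : d₀ ∘ₗ d₀ = 0)
    (hpinv₁ : (LinearMap.range d₀)ᗮ ≤ LinearMap.ker dinv)
    (hpinv₂ : LinearMap.range dinv ≤ (LinearMap.ker d₀)ᗮ)
    (hpinv₃ : ∀ v : V, d₀ (dinv v) = (Submodule.orthogonalProjection (LinearMap.range d₀) v : V))
    (d : V →ₗ[ℝ] V) (hd : d ∘ₗ d = 0)
    (D : V →ₗ[ℝ] V) (hD : D = dinv ∘ₗ (d - d₀))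
    (N : ℕ) (hDnil : D ^ (N + 1) = 0)
    (P : V →ₗ[ℝ] V) (hP : P = ∑ k ∈ Finset.range (N + 1), ((-1 : ℝ)) ^ k • D ^ k)
    (Q : V →ₗ[ℝ] V) (hQ : Q = P ∘ₗ dinv)
    (PiE : V →ₗ[ℝ] V) (hPiE : PiE = LinearMap.id - Q ∘ₗ d - d ∘ₗ Q)
    (PiE0 : V →ₗ[ℝ] V) (hPiE0 : PiE0 = LinearMap.id - dinv ∘ₗ d₀ - d₀ ∘ₗ dinv)
    (dc : V →ₗ[ℝ] V) (hdc : dc = PiE0 ∘ₗ d ∘ₗ PiE) :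
    dc ∘ₗ dc = 0 ∧ PiE ∘ₗ dc = d ∘ₗ PiE := by
  have hdm : d * d = 0 := hd
  -- `dinv ∘ dinv = 0`
  have ha : dinv * dinv = 0 := by
    ext v
    have h1 : dinv v ∈ (LinearMap.ker d₀)ᗮ := hpinv₂ (LinearMap.mem_range_self _ v)
    have h2 : LinearMap.range d₀ ≤ LinearMap.ker d₀ := LinearMap.range_le_ker_iff.mpr hd₀
    simpa using hpinv₁ (Submodule.orthogonal_le h2 h1)
  -- `dinv ∘ d₀ ∘ dinv = dinv`
  have hb : dinv * d₀ * dinv = dinv := by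
    ext v
    have hm : v - (Submodule.orthogonalProjection (LinearMap.range d₀) v : V) ∈ (LinearMap.range d₀)ᗮ :=
      Submodule.sub_starProjection_mem_orthogonal (K := LinearMap.range d₀) v
    have h0 : dinv (v - (Submodule.orthogonalProjection (LinearMap.range d₀) v : V)) = 0 := hpinv₁ hm
    rw [map_sub, sub_eq_zero] at h0
    simp only [Module.End.mul_apply]
    rw [hpinv₃ v, ← h0]
  have hDm : D = dinv * d - dinv * d₀ := by
    rw [hD]; exact mul_sub dinv d d₀
  have hdinvD : dinv * D = 0 := by
    rw [hDm, mul_sub, ← mul_assoc, ← mul_assoc, ha, zero_mul, zero_mul, sub_zero]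
  have hdinvd₀D : dinv * d₀ * D = D := by
    rw [hDm, mul_sub, ← mul_assoc, ← mul_assoc, hb, ← hDm]
  -- `P` as a geometric sum in `-D`
  have hgeom : P = ∑ k ∈ Finset.range (N + 1), (-D) ^ k := by
    rw [hP]
    refine Finset.sum_congr rfl fun k _ => ?_
    rw [show (-D) = (-1 : ℝ) • D by rw [neg_smul, one_smul], smul_pow]
  have hCD : Commute D P := by
    rw [hgeom]
    exact Commute.sum_right _ _ _ fun k _ => ((Commute.refl D).neg_right).pow_right k
  have hPD : P * D = 1 - P := by
    have h := geom_sum_mul (-D) (N + 1)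
    rw [← hgeom, neg_pow, hDnil, mul_zero, zero_sub, mul_sub, mul_one, mul_neg] at h
    rw [sub_eq_add_neg, ← neg_add] at h
    have h2 : P * D + P = 1 := neg_injective h
    rw [eq_sub_iff_add_eq]; exact h2
  have hDP : D * P = 1 - P := by rw [hCD.eq, hPD]
  -- `dinv ∘ P = dinv`
  have hdinvP : dinv * P = dinv := by
    rw [hgeom, Finset.mul_sum, Finset.sum_range_succ']
    have hz : ∀ k, dinv * (-D) ^ (k + 1) = 0 := fun k => by
      rw [pow_succ', ← mul_assoc, mul_neg, hdinvD, neg_zero, zero_mul]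
    simp [hz]
  have hPsub : ∑ k ∈ Finset.range N, (-D) ^ (k + 1) = P - 1 := by
    rw [hgeom, Finset.sum_range_succ']
    simp
  have hdd₀P : dinv * d₀ * P = P - 1 + dinv * d₀ := by
    rw [hgeom, Finset.mul_sum, Finset.sum_range_succ']
    have hz : ∀ k, dinv * d₀ * (-D) ^ (k + 1) = (-D) ^ (k + 1) := fun k => by
      rw [pow_succ', ← mul_assoc, mul_neg, hdinvd₀D]
    simp only [hz, pow_zero, mul_one]
    rw [hPsub, ← hgeom]
  -- key identity (e):  `dinv ∘ d ∘ P = dinv ∘ d₀`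
  have he : dinv * d * P = dinv * d₀ := by
    have h1 : dinv * d = D + dinv * d₀ := by rw [hDm, sub_add_cancel]
    rw [h1, add_mul, hDP, hdd₀P]
    abel
  -- key identity (f):  `P ∘ dinv ∘ d ∘ dinv = dinv`
  have hf : P * dinv * d * dinv = dinv := by
    have h1 : D * dinv = dinv * d * dinv - dinv := by rw [hDm, sub_mul, hb]
    have h2 : P * (D * dinv) = P * (dinv * (d * dinv)) - P * dinv := by
      rw [h1, mul_sub, mul_assoc]
    rw [← mul_assoc, hPD, sub_mul, one_mul] at h2
    have h3 : P * (dinv * (d * dinv)) = dinv := (sub_left_inj.mp h2).symm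
    rw [mul_assoc, mul_assoc]; exact h3
  -- Q relations
  have hQm : Q = P * dinv := hQ
  have hdinvQ : dinv * Q = 0 := by rw [hQm, ← mul_assoc, hdinvP, ha]
  have hdinvdQ : dinv * d * Q = dinv := by rw [hQm, ← mul_assoc, he, hb]
  have hQdinv : Q * dinv = 0 := by rw [hQm, mul_assoc, ha, mul_zero]
  have hQddinv : Q * d * dinv = dinv := by rw [hQm]; exact hf
  have hQQ : Q * Q = 0 := by
    have e1 : Q * Q = P * (dinv * P) * dinv := by rw [hQm]; simp only [mul_assoc]
    rw [e1, hdinvP, mul_assoc, ha, mul_zero]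
  have hQdQ : Q * d * Q = Q := by
    have e1 : Q * d * Q = P * (dinv * d * P) * dinv := by rw [hQm]; simp only [mul_assoc]
    rw [e1, he, mul_assoc, hb, hQm]
  -- PiE relations
  have hPiEm : PiE = 1 - Q * d - d * Q := hPiE
  have hdinvPiE : dinv * PiE = 0 := by
    rw [hPiEm, mul_sub, mul_sub, mul_one, ← mul_assoc, hdinvQ, zero_mul, ← mul_assoc, hdinvdQ]
    simp
  have hPiEdinv : PiE * dinv = 0 := by
    rw [hPiEm, sub_mul, sub_mul, one_mul, hQddinv, mul_assoc, hQdinv, mul_zero]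
    simp
  have hdPiE : d * PiE = d - d * Q * d := by
    rw [hPiEm, mul_sub, mul_sub, mul_one, ← mul_assoc, ← mul_assoc, hdm, zero_mul, sub_zero]
  have hPiEd : PiE * d = d - d * Q * d := by
    rw [hPiEm, sub_mul, sub_mul, one_mul, mul_assoc Q d d, hdm, mul_zero, sub_zero]
  have hcomm : d * PiE = PiE * d := by rw [hdPiE, hPiEd]
  have hQPiE : Q * PiE = 0 := by
    rw [hPiEm, mul_sub, mul_sub, mul_one]
    simp only [← mul_assoc]
    rw [hQQ, zero_mul, hQdQ]
    simp
  have hdQdPiE : d * Q * d * PiE = 0 := by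
    have e : d * Q * d * PiE = d * Q * (d * PiE) := by simp only [mul_assoc]
    rw [e, hcomm]
    have e2 : d * Q * (PiE * d) = d * (Q * PiE) * d := by simp only [mul_assoc]
    rw [e2, hQPiE, mul_zero, zero_mul]
  have hPiEdPiE : PiE * (d * PiE) = d * PiE := by
    rw [← mul_assoc, hPiEd, sub_mul, hdQdPiE, sub_zero, hdPiE]
  -- conclusion
  have hPiE0m : PiE0 = 1 - dinv * d₀ - d₀ * dinv := hPiE0
  have hdcm : dc = PiE0 * (d * PiE) := hdc
  have main2 : PiE * dc = d * PiE := by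
    rw [hdcm, hPiE0m, sub_mul, sub_mul, one_mul, mul_sub, mul_sub]
    have t1 : PiE * (dinv * d₀ * (d * PiE)) = 0 := by
      have e : PiE * (dinv * d₀ * (d * PiE)) = PiE * dinv * (d₀ * (d * PiE)) := by
        simp only [mul_assoc]
      rw [e, hPiEdinv, zero_mul]
    have t2 : PiE * (d₀ * dinv * (d * PiE)) = 0 := by
      have hz : dinv * (d * PiE) = 0 := by rw [hcomm, ← mul_assoc, hdinvPiE, zero_mul]
      have e : PiE * (d₀ * dinv * (d * PiE)) = PiE * (d₀ * (dinv * (d * PiE))) := by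
        simp only [mul_assoc]
      rw [e, hz, mul_zero, mul_zero]
    rw [t1, t2, hPiEdPiE, sub_zero, sub_zero]
  have main1 : dc * dc = 0 := by
    have e : dc * dc = PiE0 * (d * (PiE * dc)) := by
      conv_lhs => rw [hdcm]
      simp only [mul_assoc]
      rw [← hdcm]
    rw [e, main2, ← mul_assoc d d, hdm, zero_mul, mul_zero]
  exact ⟨main1, main2⟩
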